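/- Let X be a Banach space and let f be a nonzero continuous linear functional on X with kernel Z = f⁻¹(0). Then every nonempty closed convex subset C ⊆ X with d_H(C, Z) < ∞ is of the form C = f⁻¹([a,b]) for some real numbers a ≤ b. Consequently, the metric component of the codimension-1 subspace Z in Conv_H(X) consists exactly of the preimages under f of nonempty compact intervals of ℝ. -/

import Mathlib

open Set Metric ENNReal

/-- Auxiliary main lemma: the interesting direction. -/
theorem aux_component_main {X : Type*} [NormedAddCommGroup X] [NormedSpace ℝ X]
    (f : X →L[ℝ] ℝ) (u : X) (hu : f u = 1)
    (C : Set X) (hne : C.Nonempty) (hcl : IsClosed C) (hconv : Convex ℝ C)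
    (hd : EMetric.hausdorffEdist C (f ⁻¹' {0}) < ⊤) :
    ∃ a b : ℝ, a ≤ b ∧ C = f ⁻¹' Set.Icc a b := by
  set Z : Set X := f ⁻¹' {0} with hZdef
  set r : ℝ≥0∞ := EMetric.hausdorffEdist C Z + 1 with hrdef
  have hrne : r ≠ ⊤ := by
    simp only [hrdef]
    exact ENNReal.add_ne_top.mpr ⟨hd.ne, by norm_num⟩
  set R : ℝ := r.toReal with hRdef
  have hR0 : 0 ≤ R := ENNReal.toReal_nonneg
  -- every point of Z is within R of C
  have hZC : ∀ z ∈ Z, ∃ c ∈ C, dist z c ≤ R := by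
    intro z hz
    have h1 : EMetric.infEdist z C < r := by
      calc EMetric.infEdist z C ≤ EMetric.hausdorffEdist Z C :=
            EMetric.infEdist_le_hausdorffEdist_of_mem hz
        _ = EMetric.hausdorffEdist C Z := EMetric.hausdorffEdist_comm
        _ < r := by rw [hrdef]; exact ENNReal.lt_add_right hd.ne one_ne_zero
    obtain ⟨c, hc, hlt⟩ := EMetric.infEdist_lt_iff.mp h1
    refine ⟨c, hc, ?_⟩
    rw [dist_edist]
    exact ENNReal.toReal_mono hrne hlt.le
  -- every point of C is within R of Z
  have hCZ : ∀ c ∈ C, ∃ z ∈ Z, dist c z ≤ R := by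
    intro c hc
    have h1 : EMetric.infEdist c Z < r := by
      calc EMetric.infEdist c Z ≤ EMetric.hausdorffEdist C Z :=
            EMetric.infEdist_le_hausdorffEdist_of_mem hc
        _ < r := by rw [hrdef]; exact ENNReal.lt_add_right hd.ne one_ne_zero
    obtain ⟨z, hz, hlt⟩ := EMetric.infEdist_lt_iff.mp h1
    refine ⟨z, hz, ?_⟩
    rw [dist_edist]
    exact ENNReal.toReal_mono hrne hlt.le
  -- translation invariance of C by the kernel
  have htrans : ∀ c ∈ C, ∀ z : X, f z = 0 → c + z ∈ C := by
    intro c hc z hz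
    have hmem : c + z ∈ closure C := by
      rw [Metric.mem_closure_iff]
      intro ε hε
      obtain ⟨n, hn⟩ := exists_nat_gt ((R + ‖c‖) / ε)
      have hnpos : (0 : ℝ) < n :=
        lt_of_le_of_lt (div_nonneg (by positivity) hε.le) hn
      have hzn : (n : ℝ) • z ∈ Z := by
        simp only [hZdef, Set.mem_preimage, map_smul, hz, smul_eq_mul, mul_zero,
          Set.mem_singleton_iff]
      obtain ⟨cn, hcn, hdcn⟩ := hZC ((n : ℝ) • z) hzn
      set p : X := (1 - 1 / (n : ℝ)) • c + (1 / (n : ℝ)) • cn with hpdef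
      have hp : p ∈ C := by
        apply hconv hc hcn
        · have : 1 / (n : ℝ) ≤ 1 := by
            rw [div_le_one hnpos]
            exact_mod_cast Nat.one_le_cast.mpr (Nat.one_le_iff_ne_zero.mpr
              (by exact_mod_cast hnpos.ne'))
          linarith
        · positivity
        · ring
      refine ⟨p, hp, ?_⟩
      have hkey : (c + z) - p = (1 / (n : ℝ)) • (c + ((n : ℝ) • z - cn)) := by
        have hnz : (1 / (n : ℝ)) • ((n : ℝ) • z) = z := by
          rw [smul_smul, one_div, inv_mul_cancel₀ hnpos.ne', one_smul]
        rw [hpdef]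
        rw [smul_add, smul_sub, hnz]
        module
      have hnormbound : ‖(c + z) - p‖ ≤ (‖c‖ + R) / n := by
        rw [hkey, norm_smul]
        have h1 : ‖c + ((n : ℝ) • z - cn)‖ ≤ ‖c‖ + R := by
          calc ‖c + ((n : ℝ) • z - cn)‖ ≤ ‖c‖ + ‖(n : ℝ) • z - cn‖ := norm_add_le _ _
            _ ≤ ‖c‖ + R := by
                have := hdcn
                rw [dist_eq_norm] at this
                linarith
        have h2 : ‖(1 : ℝ) / (n : ℝ)‖ = 1 / (n : ℝ) := by
          rw [Real.norm_eq_abs, abs_of_pos (by positivity)]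
        rw [h2, div_mul_eq_mul_div, one_mul, div_le_div_iff₀ hnpos hnpos]
        nlinarith [norm_nonneg (c + ((n : ℝ) • z - cn))]
      have hlt : (‖c‖ + R) / n < ε := by
        rw [div_lt_iff₀ hnpos]
        have := (div_lt_iff₀ hε).mp hn
        nlinarith
      rw [dist_eq_norm]
      exact lt_of_le_of_lt hnormbound hlt
    rwa [hcl.closure_eq] at hmem
  -- the image J = f '' C
  set J : Set ℝ := f '' C with hJdef
  have hJC : ∀ x : X, f x ∈ J → x ∈ C := by
    rintro x ⟨c, hc, hfc⟩
    have : x = c + (x - c) := by abel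
    rw [this]
    exact htrans c hc (x - c) (by rw [map_sub, hfc, sub_self])
  have hJpre : J = (fun t : ℝ => t • u) ⁻¹' C := by
    ext t
    constructor
    · intro ht
      exact hJC (t • u) (by simpa [map_smul, hu] using ht)
    · intro ht
      exact ⟨t • u, ht, by simp [map_smul, hu]⟩
  have hJcl : IsClosed J := by
    rw [hJpre]
    exact hcl.preimage (continuous_id.smul continuous_const)
  have hJconv : Convex ℝ J := hconv.linear_image (f : X →ₗ[ℝ] ℝ)
  have hJbdd : ∀ t ∈ J, |t| ≤ ‖f‖ * R := by
    rintro t ⟨c, hc, hfc⟩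
    obtain ⟨z, hz, hdz⟩ := hCZ c hc
    have hfz : f z = 0 := hz
    have : t = f (c - z) := by rw [map_sub, hfc, hfz, sub_zero]
    rw [this]
    calc |f (c - z)| ≤ ‖f‖ * ‖c - z‖ := f.le_opNorm _
      _ ≤ ‖f‖ * R := by
          apply mul_le_mul_of_nonneg_left _ (norm_nonneg f)
          rwa [dist_eq_norm] at hdz
  have hbddA : BddAbove J := ⟨‖f‖ * R, fun t ht => (abs_le.mp (hJbdd t ht)).2⟩
  have hbddB : BddBelow J := ⟨-(‖f‖ * R), fun t ht => (abs_le.mp (hJbdd t ht)).1⟩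
  have hJne : J.Nonempty := hne.image f
  refine ⟨sInf J, sSup J, csInf_le_csSup hJne hbddB hbddA, ?_⟩
  have ha : sInf J ∈ J := hJcl.csInf_mem hJne hbddB
  have hb : sSup J ∈ J := hJcl.csSup_mem hJne hbddA
  have hIccJ : Set.Icc (sInf J) (sSup J) ⊆ J := hJconv.ordConnected.out ha hb
  ext x
  constructor
  · intro hx
    exact ⟨csInf_le hbddB ⟨x, hx, rfl⟩, le_csSup hbddA ⟨x, hx, rfl⟩⟩
  · intro hx
    exact hJC x (hIccJ hx)

theorem component_of_codim_one_subspace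
    {X : Type*} [NormedAddCommGroup X] [NormedSpace ℝ X] [CompleteSpace X]
    (f : X →L[ℝ] ℝ) (hf : f ≠ 0) :
    (∀ C : Set X, C.Nonempty → IsClosed C → Convex ℝ C →
      EMetric.hausdorffEdist C (f ⁻¹' {0}) < ⊤ →
      ∃ a b : ℝ, a ≤ b ∧ C = f ⁻¹' Set.Icc a b) ∧
    {C : Set X | C.Nonempty ∧ IsClosed C ∧ Convex ℝ C ∧
        EMetric.hausdorffEdist C (f ⁻¹' {0}) < ⊤} =
      {C : Set X | ∃ a b : ℝ, a ≤ b ∧ C = f ⁻¹' Set.Icc a b} := by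
  -- find u with f u = 1
  obtain ⟨x₀, hx₀⟩ : ∃ x, f x ≠ 0 := by
    by_contra h
    push_neg at h
    exact hf (by ext x; simp [h x])
  set u : X := (f x₀)⁻¹ • x₀ with hudef
  have hu : f u = 1 := by
    rw [hudef, map_smul, smul_eq_mul, inv_mul_cancel₀ hx₀]
  have main := fun C hne hcl hconv hd =>
    aux_component_main f u hu C hne hcl hconv hd
  refine ⟨main, ?_⟩
  ext C
  simp only [Set.mem_setOf_eq]
  constructor
  · rintro ⟨hne, hcl, hconv, hd⟩
    exact main C hne hcl hconv hd
  · rintro ⟨a, b, hab, rfl⟩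
    refine ⟨⟨a • u, by simp [map_smul, hu, hab]⟩,
      isClosed_Icc.preimage f.continuous,
      (convex_Icc a b).linear_preimage (f : X →ₗ[ℝ] ℝ), ?_⟩
    set M : ℝ := (|a| + |b|) * ‖u‖ with hMdef
    have hM0 : 0 ≤ M := by positivity
    apply lt_of_le_of_lt (EMetric.hausdorffEdist_le_of_mem_edist
      (r := ENNReal.ofReal M) ?_ ?_) ENNReal.ofReal_lt_top
    · intro x hx
      refine ⟨x - f x • u, by simp [map_smul, hu], ?_⟩
      rw [edist_dist]
      apply ENNReal.ofReal_le_ofReal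
      have : dist x (x - f x • u) = |f x| * ‖u‖ := by
        rw [dist_eq_norm]
        simp [norm_smul]
      rw [this]
      apply mul_le_mul_of_nonneg_right _ (norm_nonneg u)
      obtain ⟨h1, h2⟩ := hx
      rw [abs_le]
      constructor
      · have := neg_abs_le a; linarith [abs_nonneg b]
      · have := le_abs_self b; linarith [abs_nonneg a]
    · intro z hz
      have hfz : f z = 0 := hz
      refine ⟨z + a • u, by simp [map_smul, hu, hfz, hab], ?_⟩
      rw [edist_dist]
      apply ENNReal.ofReal_le_ofReal
      have : dist z (z + a • u) = |a| * ‖u‖ := by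
        rw [dist_eq_norm]
        simp [norm_smul]
      rw [this]
      apply mul_le_mul_of_nonneg_right _ (norm_nonneg u)
      linarith [abs_nonneg b]
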